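/- arXiv:1702.08627 — 7 statements merged into one kernel-verified Lean document; each statement's English description precedes it below -/
import Mathlib

section
/- Let f : E → ℝ and H : E × F → ℝ be functions, let y ∈ F, x ∈ E, let η > 0 and C ≥ 0 be reals, and let e ∈ E. Suppose x⁺ is a global minimizer over E of u ↦ f(u) + H(u, y) + (η/2)‖u − x‖² − ⟨e, u⟩, and that ‖e‖ ≤ C‖x⁺ − x‖. Then the exact objective decreases sufficiently: f(x) + H(x, y) − f(x⁺) − H(x⁺, y) ≥ (η/4 − C²/η)·‖x⁺ − x‖². (One-block sufficient-decrease estimate underlying Lemma 1, Eq. (6).) -/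
open scoped RealInnerProductSpace

/-- One-block sufficient-decrease estimate underlying Lemma 1, Eq. (6). -/
theorem stmt_5 {E F : Type*} [NormedAddCommGroup E] [InnerProductSpace ℝ E]
    [NormedAddCommGroup F] [InnerProductSpace ℝ F]
    (f : E → ℝ) (H : E → F → ℝ) (y : F) (x : E)
    (η C : ℝ) (hη : 0 < η) (hC : 0 ≤ C) (e : E) (xp : E)
    (hmin : ∀ u : E,
      f xp + H xp y + (η / 2) * ‖xp - x‖ ^ 2 - ⟪e, xp⟫ ≤
        f u + H u y + (η / 2) * ‖u - x‖ ^ 2 - ⟪e, u⟫)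
    (herr : ‖e‖ ≤ C * ‖xp - x‖) :
    f x + H x y - f xp - H xp y ≥ (η / 4 - C ^ 2 / η) * ‖xp - x‖ ^ 2 := by
  have h1 := hmin x
  simp only [sub_self, norm_zero] at h1
  have h2 : ⟪e, xp⟫ - ⟪e, x⟫ = ⟪e, xp - x⟫ := by
    rw [inner_sub_right]
  have h3 : ⟪e, xp - x⟫ ≤ ‖e‖ * ‖xp - x‖ := real_inner_le_norm e (xp - x)
  have h4 : ‖e‖ * ‖xp - x‖ ≤ C * ‖xp - x‖ * ‖xp - x‖ :=
    mul_le_mul_of_nonneg_right herr (norm_nonneg _)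
  have ht : (0:ℝ) ≤ ‖xp - x‖ := norm_nonneg _
  have hkey : (η / 4 - C ^ 2 / η) * ‖xp - x‖ ^ 2 ≤ (η / 2 - C) * ‖xp - x‖ ^ 2 := by
    have h5 : 0 ≤ (η / 2 - C) ^ 2 / η := div_nonneg (sq_nonneg _) hη.le
    have : η / 4 - C ^ 2 / η ≤ η / 2 - C := by
      nlinarith [sq_nonneg (η / 2 - C), div_mul_cancel₀ (C ^ 2) hη.ne', sq_nonneg C]
    nlinarith [sq_nonneg ‖xp - x‖]
  nlinarith [h1, h2, h3, h4]
end

section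
/- Let f : E → ℝ, g : F → ℝ, H : E × F → ℝ, and define Ψ(x, y) := f(x) + g(y) + H(x, y). Let Cx, Cy ≥ 0 and let (xᵗ) ⊂ E, (yᵗ) ⊂ F, (e_xᵗ) ⊂ E, (e_yᵗ) ⊂ F, and positive reals (η₁ᵗ), (η₂ᵗ) be such that for every t: (i) x^{t+1} is a global minimizer over E of u ↦ f(u) + H(u, yᵗ) + (η₁ᵗ/2)‖u − xᵗ‖² − ⟨e_x^{t+1}, u⟩ with ‖e_x^{t+1}‖ ≤ Cx‖x^{t+1} − xᵗ‖; (ii) y^{t+1} is a global minimizer over F of v ↦ g(v) + H(x^{t+1}, v) + (η₂ᵗ/2)‖v − yᵗ‖² − ⟨e_y^{t+1}, v⟩ with ‖e_y^{t+1}‖ ≤ Cy‖y^{t+1} − yᵗ‖. Then for every t: Ψ(xᵗ, yᵗ) − Ψ(x^{t+1}, y^{t+1}) ≥ (η₁ᵗ/4 − Cx²/η₁ᵗ)·‖x^{t+1} − xᵗ‖² + (η₂ᵗ/4 − Cy²/η₂ᵗ)·‖y^{t+1} − yᵗ‖²; in particular, if η₁ᵗ > 2Cx and η₂ᵗ > 2Cy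 then both coefficients are strictly positive. (Lemma 1, first assertion (Eq. (6)): sufficient decrease of IPAD.) -/
open scoped RealInnerProductSpace

/-- Lemma 1, first assertion (Eq. (6)): sufficient decrease of IPAD; in particular the
coefficients are strictly positive under the parameter condition of Assumption 1. -/
theorem stmt_6 {E F : Type*} [NormedAddCommGroup E] [InnerProductSpace ℝ E]
    [NormedAddCommGroup F] [InnerProductSpace ℝ F]
    (f : E → ℝ) (g : F → ℝ) (H : E → F → ℝ)
    (Cx Cy : ℝ) (hCx : 0 ≤ Cx) (hCy : 0 ≤ Cy)
    (x : ℕ → E) (y : ℕ → F) (ex : ℕ → E) (ey : ℕ → F)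
    (η₁ η₂ : ℕ → ℝ) (hη₁ : ∀ t, 0 < η₁ t) (hη₂ : ∀ t, 0 < η₂ t)
    (hx : ∀ t, ∀ u : E,
      f (x (t + 1)) + H (x (t + 1)) (y t) + (η₁ t / 2) * ‖x (t + 1) - x t‖ ^ 2
          - ⟪ex (t + 1), x (t + 1)⟫ ≤
        f u + H u (y t) + (η₁ t / 2) * ‖u - x t‖ ^ 2 - ⟪ex (t + 1), u⟫)
    (hex : ∀ t, ‖ex (t + 1)‖ ≤ Cx * ‖x (t + 1) - x t‖)
    (hy : ∀ t, ∀ v : F,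
      g (y (t + 1)) + H (x (t + 1)) (y (t + 1)) + (η₂ t / 2) * ‖y (t + 1) - y t‖ ^ 2
          - ⟪ey (t + 1), y (t + 1)⟫ ≤
        g v + H (x (t + 1)) v + (η₂ t / 2) * ‖v - y t‖ ^ 2 - ⟪ey (t + 1), v⟫)
    (hey : ∀ t, ‖ey (t + 1)‖ ≤ Cy * ‖y (t + 1) - y t‖) :
    ∀ t : ℕ,
      ((f (x t) + g (y t) + H (x t) (y t))
          - (f (x (t + 1)) + g (y (t + 1)) + H (x (t + 1)) (y (t + 1))) ≥
        (η₁ t / 4 - Cx ^ 2 / η₁ t) * ‖x (t + 1) - x t‖ ^ 2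
          + (η₂ t / 4 - Cy ^ 2 / η₂ t) * ‖y (t + 1) - y t‖ ^ 2)
      ∧ (η₁ t > 2 * Cx → 0 < η₁ t / 4 - Cx ^ 2 / η₁ t)
      ∧ (η₂ t > 2 * Cy → 0 < η₂ t / 4 - Cy ^ 2 / η₂ t) := by
  intro t
  have hη1 := hη₁ t
  have hη2 := hη₂ t
  have hc1 : Cx ^ 2 / η₁ t * η₁ t = Cx ^ 2 := div_mul_cancel₀ _ (ne_of_gt hη1)
  have hc2 : Cy ^ 2 / η₂ t * η₂ t = Cy ^ 2 := div_mul_cancel₀ _ (ne_of_gt hη2)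
  have coeff1 : η₁ t / 4 - Cx ^ 2 / η₁ t ≤ η₁ t / 2 - Cx := by
    nlinarith [sq_nonneg (η₁ t - 2 * Cx)]
  have coeff2 : η₂ t / 4 - Cy ^ 2 / η₂ t ≤ η₂ t / 2 - Cy := by
    nlinarith [sq_nonneg (η₂ t - 2 * Cy)]
  refine ⟨?_, fun h => by nlinarith, fun h => by nlinarith⟩
  set a := ‖x (t + 1) - x t‖ with ha
  set b := ‖y (t + 1) - y t‖ with hb
  have hx1 := hx t (x t)
  have hy1 := hy t (y t)
  simp only [sub_self, norm_zero] at hx1 hy1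
  have hipx : ⟪ex (t + 1), x (t + 1)⟫ - ⟪ex (t + 1), x t⟫ = ⟪ex (t + 1), x (t + 1) - x t⟫ :=
    (inner_sub_right _ _ _).symm
  have hipy : ⟪ey (t + 1), y (t + 1)⟫ - ⟪ey (t + 1), y t⟫ = ⟪ey (t + 1), y (t + 1) - y t⟫ :=
    (inner_sub_right _ _ _).symm
  have hcsx : ⟪ex (t + 1), x (t + 1) - x t⟫ ≤ Cx * a ^ 2 := by
    calc ⟪ex (t + 1), x (t + 1) - x t⟫ ≤ ‖ex (t + 1)‖ * a := real_inner_le_norm _ _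
    _ ≤ (Cx * a) * a := by
        exact mul_le_mul_of_nonneg_right (hex t) (norm_nonneg _)
    _ = Cx * a ^ 2 := by ring
  have hcsy : ⟪ey (t + 1), y (t + 1) - y t⟫ ≤ Cy * b ^ 2 := by
    calc ⟪ey (t + 1), y (t + 1) - y t⟫ ≤ ‖ey (t + 1)‖ * b := real_inner_le_norm _ _
    _ ≤ (Cy * b) * b := by
        exact mul_le_mul_of_nonneg_right (hey t) (norm_nonneg _)
    _ = Cy * b ^ 2 := by ring
  have decx : f (x t) + H (x t) (y t) - (f (x (t + 1)) + H (x (t + 1)) (y t)) ≥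
      (η₁ t / 2 - Cx) * a ^ 2 := by nlinarith [hx1, hcsx, hipx]
  have decy : g (y t) + H (x (t + 1)) (y t) - (g (y (t + 1)) + H (x (t + 1)) (y (t + 1))) ≥
      (η₂ t / 2 - Cy) * b ^ 2 := by nlinarith [hy1, hcsy, hipy]
  have m1 := mul_le_mul_of_nonneg_right coeff1 (sq_nonneg a)
  have m2 := mul_le_mul_of_nonneg_right coeff2 (sq_nonneg b)
  linarith
end

section
/- Let E be a real inner product space and Ψ : E → ℝ continuously differentiable and bounded below. Let a, b > 0 and let (zᵗ)_{t∈ℕ} ⊂ E satisfy, for all t, (H1) Ψ(zᵗ) − Ψ(z^{t+1}) ≥ a‖z^{t+1} − zᵗ‖² and (H2) ‖∇Ψ(z^{t+1})‖ ≤ b‖z^{t+1} − zᵗ‖. Then every cluster point z* of (zᵗ) is a critical point of Ψ, i.e. ∇Ψ(z*) = 0, and moreover Ψ(zᵗ) converges to Ψ(z*). (Subsequence-convergence step in the proof of Theorem 1, in the smooth setting where the subdifferential reduces to the gradient.) -/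
open Filter

/-- Subsequence-convergence step in the proof of Theorem 1 (smooth setting): every
cluster point of the IPAD iterates is a critical point of Ψ, and Ψ(zᵗ) converges to
the value of Ψ there. -/
theorem stmt_10 {E : Type*} [NormedAddCommGroup E] [InnerProductSpace ℝ E] [CompleteSpace E]
    (Ψ : E → ℝ) (hΨ : ContDiff ℝ 1 Ψ) (hbdd : ∃ m : ℝ, ∀ z : E, m ≤ Ψ z)
    (a b : ℝ) (ha : 0 < a) (hb : 0 < b) (z : ℕ → E)
    (H1 : ∀ t : ℕ, Ψ (z t) - Ψ (z (t + 1)) ≥ a * ‖z (t + 1) - z t‖ ^ 2)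
    (H2 : ∀ t : ℕ, ‖gradient Ψ (z (t + 1))‖ ≤ b * ‖z (t + 1) - z t‖) :
    ∀ zstar : E,
      (∃ φ : ℕ → ℕ, StrictMono φ ∧ Tendsto (fun k => z (φ k)) atTop (nhds zstar)) →
        gradient Ψ zstar = 0 ∧ Tendsto (fun t => Ψ (z t)) atTop (nhds (Ψ zstar)) := by
  intro zstar ⟨φ, hφ, hconv⟩
  obtain ⟨m, hm⟩ := hbdd
  -- Ψ ∘ z is antitone
  have hanti : Antitone fun t => Ψ (z t) := by
    apply antitone_nat_of_succ_le
    intro t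
    have := H1 t
    nlinarith [sq_nonneg ‖z (t + 1) - z t‖]
  -- continuity facts
  have hgradc : Continuous (gradient Ψ) := by
    have : Continuous (fderiv ℝ Ψ) := hΨ.continuous_fderiv one_ne_zero
    exact (InnerProductSpace.toDual ℝ E).symm.continuous.comp this
  have hΨc : Continuous Ψ := hΨ.continuous
  -- Ψ (z t) converges to its infimum L
  set L := ⨅ t, Ψ (z t) with hLdef
  have hL : Tendsto (fun t => Ψ (z t)) atTop (nhds L) :=
    tendsto_atTop_ciInf hanti ⟨m, fun y ⟨t, ht⟩ => ht ▸ hm (z t)⟩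
  -- along the subsequence, Ψ(z φk) → Ψ zstar and → L
  have h1 : Tendsto (fun k => Ψ (z (φ k))) atTop (nhds (Ψ zstar)) :=
    (hΨc.tendsto zstar).comp hconv
  have h2 : Tendsto (fun k => Ψ (z (φ k))) atTop (nhds L) :=
    hL.comp hφ.tendsto_atTop
  have hLeq : L = Ψ zstar := tendsto_nhds_unique h2 h1
  refine ⟨?_, hLeq ▸ hL⟩
  rw [← hLeq] at *
  -- differences tend to 0
  have hdiff : Tendsto (fun t => Ψ (z t) - Ψ (z (t + 1))) atTop (nhds 0) := by
    have := hL.sub (hL.comp (tendsto_add_atTop_nat 1))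
    simpa using this
  have hnorm : Tendsto (fun t => ‖z (t + 1) - z t‖) atTop (nhds 0) := by
    have hsq : Tendsto (fun t => ‖z (t + 1) - z t‖ ^ 2) atTop (nhds 0) := by
      apply squeeze_zero (fun t => sq_nonneg _) (fun t => ?_)
        (by simpa using hdiff.const_mul a⁻¹)
      have := H1 t
      rw [ge_iff_le, ← le_div_iff₀' ha] at this
      simpa [div_eq_inv_mul] using this
    have := hsq.sqrt
    simpa [Real.sqrt_sq (norm_nonneg _)] using this
  have hgrad0 : Tendsto (fun t => gradient Ψ (z (t + 1))) atTop (nhds 0) := by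
    rw [tendsto_zero_iff_norm_tendsto_zero]
    exact squeeze_zero (fun t => norm_nonneg _) H2 (by simpa using hnorm.const_mul b)
  have hgrad0' : Tendsto (fun t => gradient Ψ (z t)) atTop (nhds 0) :=
    (tendsto_add_atTop_iff_nat 1).mp hgrad0
  have hA : Tendsto (fun k => gradient Ψ (z (φ k))) atTop (nhds (gradient Ψ zstar)) :=
    (hgradc.tendsto zstar).comp hconv
  have hB : Tendsto (fun k => gradient Ψ (z (φ k))) atTop (nhds 0) :=
    hgrad0'.comp hφ.tendsto_atTop
  exact tendsto_nhds_unique hA hB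
end

section
/- Let E be a real inner product space, Ψ : E → ℝ differentiable, Ψ* ∈ ℝ, μ > 0, a, b > 0, and let φ : [0, μ) → ℝ be a concave function that is differentiable on (0, μ) with φ' > 0 there. Let z⁻, z, z⁺ ∈ E, set r := Ψ(z) − Ψ* and r⁺ := Ψ(z⁺) − Ψ*, and assume: (i) 0 < r < μ and 0 ≤ r⁺; (ii) Ψ(z) − Ψ(z⁺) ≥ a‖z⁺ − z‖²; (iii) ‖∇Ψ(z)‖ ≤ b‖z − z⁻‖; (iv) the Kurdyka–Łojasiewicz inequality φ'(r)·‖∇Ψ(z)‖ ≥ 1 holds. Then 2‖z⁺ − z‖ ≤ ‖z − z⁻‖ + (b/a)·(φ(r) − φ(r⁺)). (Key one-step inequality in the Kurdyka–Łojasiewicz argument proving Theorem 1, in the smooth setting.) -/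
set_option maxHeartbeats 1600000 in
/-- Key one-step inequality in the Kurdyka–Łojasiewicz argument proving Theorem 1
(smooth setting). -/
theorem stmt_11 {E : Type*} [NormedAddCommGroup E] [InnerProductSpace ℝ E] [CompleteSpace E]
    (Ψ : E → ℝ) (hΨ : Differentiable ℝ Ψ)
    (Ψstar μ a b : ℝ) (hμ : 0 < μ) (ha : 0 < a) (hb : 0 < b)
    (φ φ' : ℝ → ℝ)
    (hconc : ConcaveOn ℝ (Set.Ico 0 μ) φ)
    (hderiv : ∀ s ∈ Set.Ioo (0 : ℝ) μ, HasDerivAt φ (φ' s) s)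
    (hφ'pos : ∀ s ∈ Set.Ioo (0 : ℝ) μ, 0 < φ' s)
    (zm z zp : E)
    (hr0 : 0 < Ψ z - Ψstar) (hrμ : Ψ z - Ψstar < μ) (hrp : 0 ≤ Ψ zp - Ψstar)
    (hdec : Ψ z - Ψ zp ≥ a * ‖zp - z‖ ^ 2)
    (hgrad : ‖gradient Ψ z‖ ≤ b * ‖z - zm‖)
    (hKL : φ' (Ψ z - Ψstar) * ‖gradient Ψ z‖ ≥ 1) :
    2 * ‖zp - z‖ ≤ ‖z - zm‖ + (b / a) * (φ (Ψ z - Ψstar) - φ (Ψ zp - Ψstar)) := by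
  set r : ℝ := Ψ z - Ψstar with hr
  set rp : ℝ := Ψ zp - Ψstar with hrpdef
  set X : ℝ := ‖zp - z‖ with hX
  set Y : ℝ := ‖z - zm‖ with hY
  set G : ℝ := ‖gradient Ψ z‖ with hG
  have hXnn : 0 ≤ X := norm_nonneg _
  have hrdiff : r - rp = Ψ z - Ψ zp := by simp [hr, hrpdef]
  clear_value r rp X Y G
  have hle : rp ≤ r := by nlinarith [sq_nonneg X]
  have hrpμ : rp < μ := lt_of_le_of_lt hle hrμ
  have hφ' : 0 < φ' r := hφ'pos r ⟨hr0, hrμ⟩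
  -- concavity: φ r - φ rp ≥ φ' r * (r - rp)
  have hkey : φ' r * (r - rp) ≤ φ r - φ rp := by
    rcases eq_or_lt_of_le hle with h | h
    · rw [h]; simp
    · have hslope := (hconc.neg).slope_le_of_hasDerivAt (x := rp) (y := r)
        ⟨hrp, hrpμ⟩ ⟨hr0.le, hrμ⟩ h ((hderiv r ⟨hr0, hrμ⟩).neg)
      rw [slope_def_field] at hslope
      have hd : 0 < r - rp := sub_pos.2 h
      rw [div_le_iff₀ hd] at hslope
      simp only [Pi.neg_apply] at hslope
      nlinarith [hslope]
  have hGpos : 0 < G := by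
    rcases lt_or_ge 0 G with h | h
    · exact h
    · have hG0 : G = 0 := le_antisymm h (hG ▸ norm_nonneg _)
      rw [hG0] at hKL; nlinarith
  have hYpos : 0 < Y := by nlinarith
  -- a * X^2 ≤ (φ r - φ rp) * b * Y
  have h1 : φ' r * (a * X ^ 2) ≤ φ r - φ rp := by nlinarith
  have hDnn : 0 ≤ φ r - φ rp := le_trans (by positivity) h1
  have h2 : a * X ^ 2 ≤ (φ r - φ rp) * G := by nlinarith [mul_nonneg (mul_nonneg ha.le (sq_nonneg X)) hGpos.le]
  have h3 : a * X ^ 2 ≤ (φ r - φ rp) * (b * Y) := le_trans h2 (by nlinarith)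
  clear hG hgrad hKL hΨ hconc hderiv hφ'pos hX hY hr hrpdef hrdiff
  have h4 : X ^ 2 ≤ (b / a) * (φ r - φ rp) * Y := by
    rw [div_mul_eq_mul_div, div_mul_eq_mul_div, le_div_iff₀ ha]
    nlinarith
  have h6 : 2 * X * Y ≤ X ^ 2 + Y ^ 2 := by nlinarith [sq_nonneg (X - Y)]
  have h5 : 2 * X * Y ≤ (Y + (b / a) * (φ r - φ rp)) * Y := by nlinarith [h4, h6]
  exact (mul_le_mul_iff_of_pos_right hYpos).mp h5
end

section
/- Let E be a finite-dimensional real inner product space, Ψ : E → ℝ continuously differentiable, and let (zᵗ)_{t∈ℕ} ⊂ E be a bounded sequence. Let a, b > 0 and assume for every t: (H1) Ψ(zᵗ) − Ψ(z^{t+1}) ≥ a‖z^{t+1} − zᵗ‖² and (H2) ‖∇Ψ(z^{t+1})‖ ≤ b‖z^{t+1} − zᵗ‖. Let Ψ* := lim_t Ψ(zᵗ) (which exists), and suppose there are μ > 0 and a continuous concave function φ : [0, μ) → [0, ∞) with φ(0) = 0, differentiable on (0, μ) with φ' > 0, such that Ψ(zᵗ) − Ψ* < μ for all t and φ'(Ψ(zᵗ)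 − Ψ*)·‖∇Ψ(zᵗ)‖ ≥ 1 for every t with Ψ(zᵗ) > Ψ*. Then ∑_{t=0}^{∞} ‖z^{t+1} − zᵗ‖ < ∞; in particular (zᵗ) is a Cauchy sequence and converges to a point z* with ∇Ψ(z*) = 0. (Theorem 1 of the paper in the setting where the objective is continuously differentiable, so that the limiting subdifferential reduces to the gradient: the IPAD iterates form a Cauchy sequence converging to a critical point.) -/
open Filter

/-- Tangent line inequality for a concave function at the right endpoint. -/
lemma concave_tangent_le {μ : ℝ} {φ φ' : ℝ → ℝ}
    (hconc : ConcaveOn ℝ (Set.Ico 0 μ) φ)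
    {x y : ℝ} (hx : x ∈ Set.Ico (0 : ℝ) μ) (hy : y ∈ Set.Ico (0 : ℝ) μ)
    (hyx : y ≤ x) (hd : HasDerivAt φ (φ' x) x) :
    φ' x * (x - y) ≤ φ x - φ y := by
  rcases eq_or_lt_of_le hyx with rfl | hlt
  · simp
  · have hslope := hconc.le_slope_of_hasDerivAt hy hx hlt hd
    rw [slope_def_field] at hslope
    have hxy : 0 < x - y := by linarith
    rw [le_div_iff₀ hxy] at hslope
    linarith


/-- Pure arithmetic core of the KL finite-length argument. -/
lemma key_arith {a b d0 d1 p dl xy : ℝ} (ha : 0 < a) (hb : 0 < b)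
    (hd0 : 0 ≤ d0) (hd1 : 0 ≤ d1) (hp : 0 < p)
    (hdec : a * d1 ^ 2 ≤ xy) (htan : p * xy ≤ dl)
    (h1 : 1 ≤ p * (b * d0)) :
    d1 ≤ 1 / 2 * d0 + b / (2 * a) * dl := by
  have hxy : 0 ≤ xy := le_trans (by positivity) hdec
  have hdl : 0 ≤ dl := le_trans (mul_nonneg hp.le hxy) htan
  have hbd : (0 : ℝ) ≤ b * d0 := by positivity
  have step1 : a * d1 ^ 2 ≤ a * d1 ^ 2 * (p * (b * d0)) :=
    le_mul_of_one_le_right (by positivity) h1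
  have step3 : p * (a * d1 ^ 2) * (b * d0) ≤ p * xy * (b * d0) :=
    mul_le_mul_of_nonneg_right (mul_le_mul_of_nonneg_left hdec hp.le) hbd
  have step4 : p * xy * (b * d0) ≤ dl * (b * d0) :=
    mul_le_mul_of_nonneg_right htan hbd
  have h2 : a * d1 ^ 2 ≤ dl * (b * d0) := by nlinarith [step1, step3, step4]
  have h2as : 2 * a * (1 / 2 * d0 + b / (2 * a) * dl) = a * d0 + b * dl := by
    field_simp
  have h5 : (2 * a * d1) ^ 2 ≤ (a * d0 + b * dl) ^ 2 := by
    nlinarith [mul_le_mul_of_nonneg_left h2 (by positivity : (0 : ℝ) ≤ 4 * a),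
      sq_nonneg (a * d0 - b * dl)]
  have h6 : 2 * a * d1 ≤ a * d0 + b * dl := by
    have := Real.sqrt_le_sqrt h5
    rwa [Real.sqrt_sq (by positivity), Real.sqrt_sq (by positivity)] at this
  rw [← h2as] at h6
  exact (mul_le_mul_iff_right₀ (by positivity : (0 : ℝ) < 2 * a)).mp h6

/-- Theorem 1 of the paper in the continuously differentiable setting: under sufficient
decrease, relative error and the Kurdyka–Łojasiewicz inequality, the IPAD iterates have
finite length, form a Cauchy sequence and converge to a critical point of Ψ. -/
theorem stmt_13 {E : Type*} [NormedAddCommGroup E] [InnerProductSpace ℝ E]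
    [FiniteDimensional ℝ E]
    (Ψ : E → ℝ) (hΨ : ContDiff ℝ 1 Ψ)
    (z : ℕ → E) (hbdd : ∃ B : ℝ, ∀ t : ℕ, ‖z t‖ ≤ B)
    (a b : ℝ) (ha : 0 < a) (hb : 0 < b)
    (H1 : ∀ t : ℕ, Ψ (z t) - Ψ (z (t + 1)) ≥ a * ‖z (t + 1) - z t‖ ^ 2)
    (H2 : ∀ t : ℕ, ‖gradient Ψ (z (t + 1))‖ ≤ b * ‖z (t + 1) - z t‖)
    (Ψstar : ℝ) (hlim : Tendsto (fun t => Ψ (z t)) atTop (nhds Ψstar))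
    (μ : ℝ) (hμ : 0 < μ) (φ φ' : ℝ → ℝ)
    (hcont : ContinuousOn φ (Set.Ico 0 μ))
    (hconc : ConcaveOn ℝ (Set.Ico 0 μ) φ)
    (hφ0 : φ 0 = 0) (hφnn : ∀ s ∈ Set.Ico (0 : ℝ) μ, 0 ≤ φ s)
    (hderiv : ∀ s ∈ Set.Ioo (0 : ℝ) μ, HasDerivAt φ (φ' s) s)
    (hφ'pos : ∀ s ∈ Set.Ioo (0 : ℝ) μ, 0 < φ' s)
    (hμt : ∀ t : ℕ, Ψ (z t) - Ψstar < μ)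
    (hKL : ∀ t : ℕ, Ψ (z t) > Ψstar →
      φ' (Ψ (z t) - Ψstar) * ‖gradient Ψ (z t)‖ ≥ 1) :
    Summable (fun t : ℕ => ‖z (t + 1) - z t‖) ∧ CauchySeq z ∧
      ∃ zstar : E, Tendsto z atTop (nhds zstar) ∧ gradient Ψ zstar = 0 := by
  set d : ℕ → ℝ := fun t => ‖z (t + 1) - z t‖ with hd
  have hdnn : ∀ t, 0 ≤ d t := fun t => norm_nonneg _
  -- Ψ(z t) is nonincreasing
  have hmono : ∀ t, Ψ (z (t + 1)) ≤ Ψ (z t) := by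
    intro t
    have h1 := H1 t
    nlinarith [sq_nonneg (d t)]
  have hanti : Antitone fun t => Ψ (z t) :=
    antitone_nat_of_succ_le hmono
  -- Ψ(z t) ≥ Ψstar
  have hge : ∀ t, Ψstar ≤ Ψ (z t) := by
    intro t
    refine le_of_tendsto hlim ?_
    filter_upwards [eventually_ge_atTop t] with s hs
    exact hanti hs
  -- summability of d
  have hsum : Summable d := by
    by_cases hA : ∃ T, Ψ (z T) = Ψstar
    · -- eventually constant
      obtain ⟨T, hT⟩ := hA
      have hzero : ∀ s, T ≤ s → d s = 0 := by
        intro s hs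
        have h1 : Ψ (z s) = Ψstar :=
          le_antisymm (hT ▸ hanti hs) (hge s)
        have h2 : Ψ (z (s + 1)) = Ψstar :=
          le_antisymm (hT ▸ hanti (hs.trans (Nat.le_succ s))) (hge (s + 1))
        have h3 := H1 s
        rw [h1, h2] at h3
        have h4 : ‖z (s + 1) - z s‖ ^ 2 = 0 :=
          le_antisymm (by nlinarith) (sq_nonneg _)
        have h5 : ‖z (s + 1) - z s‖ = 0 := by
          exact sq_eq_zero_iff.mp h4
        simpa [hd] using h5
      refine summable_of_ne_finset_zero (s := Finset.range T) ?_
      intro s hs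
      exact hzero s (by simp [Finset.mem_range] at hs; omega)
    · push_neg at hA
      have hgt : ∀ t, Ψstar < Ψ (z t) := fun t => lt_of_le_of_ne (hge t) (Ne.symm (hA t))
      set r : ℕ → ℝ := fun t => Ψ (z t) - Ψstar with hr
      have hrmem : ∀ t, r t ∈ Set.Ioo (0 : ℝ) μ := fun t => ⟨sub_pos.mpr (hgt t), hμt t⟩
      -- key recursive inequality
      have key : ∀ t, d (t + 1) ≤ (1 / 2) * d t + (b / (2 * a)) * (φ (r (t + 1)) - φ (r (t + 2))) := by
        intro t
        set x := r (t + 1)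
        set y := r (t + 2)
        have hx := hrmem (t + 1)
        have hy := hrmem (t + 2)
        have hdec : a * d (t + 1) ^ 2 ≤ x - y := by
          have h0 := H1 (t + 1)
          show a * ‖z (t + 1 + 1) - z (t + 1)‖ ^ 2
              ≤ (Ψ (z (t + 1)) - Ψstar) - (Ψ (z (t + 1 + 1)) - Ψstar)
          linarith
        have hyx : y ≤ x := by nlinarith [sq_nonneg (d (t + 1))]
        have htan : φ' x * (x - y) ≤ φ x - φ y :=
          concave_tangent_le hconc (Set.mem_Ico.mpr ⟨hx.1.le, hx.2⟩)
            (Set.mem_Ico.mpr ⟨hy.1.le, hy.2⟩) hyx (hderiv x hx)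
        have hp : 0 < φ' x := hφ'pos x hx
        have hkl := hKL (t + 1) (hgt (t + 1))
        have hg := H2 t
        have h1 : 1 ≤ φ' x * (b * d t) := by
          calc (1 : ℝ) ≤ φ' x * ‖gradient Ψ (z (t + 1))‖ := hkl
            _ ≤ φ' x * (b * d t) := mul_le_mul_of_nonneg_left hg hp.le
        exact key_arith ha hb (hdnn t) (hdnn (t + 1)) hp hdec htan h1
      -- partial sums bounded
      have hφ1nn : 0 ≤ φ (r 1) := hφnn _ (Set.mem_Ico.mpr ⟨(hrmem 1).1.le, (hrmem 1).2⟩)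
      set M := 2 * d 0 + (b / a) * φ (r 1) with hM
      have hbound : ∀ N, ∑ t ∈ Finset.range N, d t ≤ M := by
        intro N
        induction N with
        | zero =>
          simp only [Finset.range_zero, Finset.sum_empty, hM]
          have h0 := hdnn 0
          have h1 : 0 ≤ b / a * φ (r 1) := mul_nonneg (by positivity) hφ1nn
          linarith
        | succ n _ =>
          -- direct: S_{n+1} ≤ d0 + 1/2 S_n + (b/(2a)) φ(r 1) and S_n ≤ S_{n+1}
          have hsplit : ∑ t ∈ Finset.range (n + 1), d t
              = (∑ t ∈ Finset.range n, d (t + 1)) + d 0 := Finset.sum_range_succ' d n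
          have htel : ∑ t ∈ Finset.range n, (φ (r (t + 1)) - φ (r (t + 2)))
              = φ (r 1) - φ (r (n + 1)) := by
            have := Finset.sum_range_sub' (fun i => φ (r (i + 1))) n
            simpa using this
          have hsum1 : ∑ t ∈ Finset.range n, d (t + 1)
              ≤ (1 / 2) * ∑ t ∈ Finset.range n, d t
                + (b / (2 * a)) * (φ (r 1) - φ (r (n + 1))) := by
            calc ∑ t ∈ Finset.range n, d (t + 1)
                ≤ ∑ t ∈ Finset.range n,
                    ((1 / 2) * d t + (b / (2 * a)) * (φ (r (t + 1)) - φ (r (t + 2)))) :=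
                  Finset.sum_le_sum fun t _ => key t
              _ = (1 / 2) * ∑ t ∈ Finset.range n, d t
                + (b / (2 * a)) * (φ (r 1) - φ (r (n + 1))) := by
                  rw [Finset.sum_add_distrib, ← Finset.mul_sum, ← Finset.mul_sum, htel]
          have hφn1 : 0 ≤ φ (r (n + 1)) :=
            hφnn _ (Set.mem_Ico.mpr ⟨(hrmem (n + 1)).1.le, (hrmem (n + 1)).2⟩)
          have hself : ∑ t ∈ Finset.range n, d t ≤ ∑ t ∈ Finset.range (n + 1), d t := by
            rw [Finset.sum_range_succ]; linarith [hdnn n]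
          -- assemble: S_{n+1} ≤ d 0 + 1/2 S_{n+1} + (b/(2a)) φ(r 1)
          have hba : 0 < b / (2 * a) := by positivity
          have : ∑ t ∈ Finset.range (n + 1), d t
              ≤ d 0 + (1 / 2) * ∑ t ∈ Finset.range (n + 1), d t + (b / (2 * a)) * φ (r 1) := by
            have h5 : (b / (2 * a)) * (φ (r 1) - φ (r (n + 1))) ≤ (b / (2 * a)) * φ (r 1) := by
              apply mul_le_mul_of_nonneg_left _ hba.le
              linarith
            calc ∑ t ∈ Finset.range (n + 1), d t
                = (∑ t ∈ Finset.range n, d (t + 1)) + d 0 := hsplit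
              _ ≤ ((1 / 2) * ∑ t ∈ Finset.range n, d t
                    + (b / (2 * a)) * (φ (r 1) - φ (r (n + 1)))) + d 0 := by linarith
              _ ≤ d 0 + (1 / 2) * ∑ t ∈ Finset.range (n + 1), d t + (b / (2 * a)) * φ (r 1) := by
                  have := mul_le_mul_of_nonneg_left hself (by norm_num : (0:ℝ) ≤ 1 / 2)
                  linarith
          have heq : (b / (2 * a)) * φ (r 1) * 2 = (b / a) * φ (r 1) := by
            field_simp
          rw [hM]
          linarith [this, heq]
      exact summable_of_sum_range_le hdnn hbound
  -- Cauchy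
  have hcauchy : CauchySeq z := by
    apply cauchySeq_of_summable_dist
    have : (fun n => dist (z n) (z (n + 1))) = d := by
      funext n; rw [dist_eq_norm, norm_sub_rev]
    rw [show (fun n => dist (z n) (z n.succ)) = d from this]
    exact hsum
  obtain ⟨zstar, hz⟩ := cauchySeq_tendsto_of_complete hcauchy
  refine ⟨hsum, hcauchy, zstar, hz, ?_⟩
  -- gradient at limit is zero
  have hgc : Continuous (gradient Ψ) :=
    (InnerProductSpace.toDual ℝ E).symm.continuous.comp (hΨ.continuous_fderiv one_ne_zero)
  have htend1 : Tendsto (fun t => gradient Ψ (z (t + 1))) atTop (nhds (gradient Ψ zstar)) :=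
    ((hgc.tendsto zstar).comp hz).comp (tendsto_add_atTop_nat 1)
  have hd0 : Tendsto d atTop (nhds 0) := hsum.tendsto_atTop_zero
  have htend0 : Tendsto (fun t => gradient Ψ (z (t + 1))) atTop (nhds 0) := by
    rw [tendsto_zero_iff_norm_tendsto_zero]
    refine squeeze_zero (fun t => norm_nonneg _) (fun t => H2 t) ?_
    have : Tendsto (fun t => b * d t) atTop (nhds (b * 0)) := hd0.const_mul b
    simpa using this
  exact tendsto_nhds_unique htend1 htend0
end

section
/- Let E be a real inner product space, Ψ : E → ℝ differentiable, Ψ* ∈ ℝ, and (zᵗ)_{t∈ℕ} ⊂ E with Ψ(zᵗ) ≥ Ψ* for all t. Let a, b, δ > 0 and assume for every t: (H1) Ψ(zᵗ) − Ψ(z^{t+1}) ≥ a‖z^{t+1} − zᵗ‖², (H2) ‖∇Ψ(z^{t+1})‖ ≤ b‖z^{t+1} − zᵗ‖, and ‖∇Ψ(z^{t+1})‖ ≥ δ whenever Ψ(z^{t+1}) > Ψ*. Then the iteration terminates in finitely many steps: there exists T ∈ ℕ such that for all t ≥ T, Ψ(zᵗ) = Ψ* and z^{t+1} = zᵗ.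 (The θ = 1 case of the convergence-rate claim: with desingularizing function φ(s) = (C/θ)s^θ and θ = 1, IPAD converges in a finite number of steps.) -/
/-- The θ = 1 case of the convergence-rate claim: with a uniform lower bound on the
gradient above the limiting value, IPAD terminates in a finite number of steps. -/
theorem stmt_14 {E : Type*} [NormedAddCommGroup E] [InnerProductSpace ℝ E] [CompleteSpace E]
    (Ψ : E → ℝ) (hΨ : Differentiable ℝ Ψ)
    (Ψstar : ℝ) (z : ℕ → E) (hge : ∀ t : ℕ, Ψ (z t) ≥ Ψstar)
    (a b δ : ℝ) (ha : 0 < a) (hb : 0 < b) (hδ : 0 < δ)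
    (H1 : ∀ t : ℕ, Ψ (z t) - Ψ (z (t + 1)) ≥ a * ‖z (t + 1) - z t‖ ^ 2)
    (H2 : ∀ t : ℕ, ‖gradient Ψ (z (t + 1))‖ ≤ b * ‖z (t + 1) - z t‖)
    (hlow : ∀ t : ℕ, Ψ (z (t + 1)) > Ψstar → ‖gradient Ψ (z (t + 1))‖ ≥ δ) :
    ∃ T : ℕ, ∀ t ≥ T, Ψ (z t) = Ψstar ∧ z (t + 1) = z t := by
  -- monotonicity
  have hmono : ∀ t : ℕ, Ψ (z (t + 1)) ≤ Ψ (z t) := by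
    intro t
    have h := H1 t
    nlinarith [norm_nonneg (z (t + 1) - z t), sq_nonneg ‖z (t + 1) - z t‖]
  set ε : ℝ := a * (δ / b) ^ 2 with hε
  have hεpos : 0 < ε := by positivity
  -- each strictly-above step decreases by ε
  have hstep : ∀ t : ℕ, Ψ (z (t + 1)) > Ψstar → Ψ (z t) - Ψ (z (t + 1)) ≥ ε := by
    intro t ht
    have h2 := H2 t
    have hg := hlow t ht
    have hnorm : ‖z (t + 1) - z t‖ ≥ δ / b := by
      rw [ge_iff_le, div_le_iff₀ hb]
      nlinarith
    have h1 := H1 t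
    have : a * (δ / b) ^ 2 ≤ a * ‖z (t + 1) - z t‖ ^ 2 := by
      apply mul_le_mul_of_nonneg_left _ ha.le
      apply pow_le_pow_left₀ (by positivity) hnorm
    linarith
  -- there is T with Ψ (z T) = Ψstar
  have hexT : ∃ T : ℕ, Ψ (z T) = Ψstar := by
    by_contra h
    push_neg at h
    have hgt : ∀ t : ℕ, Ψ (z t) > Ψstar := fun t => lt_of_le_of_ne (hge t) (Ne.symm (h t))
    have htele : ∀ n : ℕ, Ψ (z 0) - Ψ (z n) ≥ n * ε := by
      intro n
      induction n with
      | zero => simp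
      | succ n ih =>
        have := hstep n (hgt (n + 1))
        push_cast
        linarith
    obtain ⟨n, hn⟩ := exists_nat_gt ((Ψ (z 0) - Ψstar) / ε)
    have := htele n
    have hge0 := hge n
    rw [div_lt_iff₀ hεpos] at hn
    linarith
  obtain ⟨T, hT⟩ := hexT
  refine ⟨T, fun t ht => ?_⟩
  -- Ψ (z t) = Ψstar for all t ≥ T
  have hall : ∀ t : ℕ, t ≥ T → Ψ (z t) = Ψstar := by
    intro t ht
    induction t with
    | zero =>
      have hT0 : T = 0 := by omega
      exact hT0 ▸ hT
    | succ n ih =>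
      rcases Nat.lt_or_ge T (n + 1) with h | h
      · have hn := ih (by omega)
        have := hmono n
        have := hge (n + 1)
        linarith
      · have : T = n + 1 := by omega
        exact this ▸ hT
  have ht1 : Ψ (z t) = Ψstar := hall t ht
  have ht2 : Ψ (z (t + 1)) = Ψstar := hall (t + 1) (by omega)
  refine ⟨ht1, ?_⟩
  have h1 := H1 t
  have : ‖z (t + 1) - z t‖ ^ 2 ≤ 0 := by nlinarith
  have : ‖z (t + 1) - z t‖ = 0 := by nlinarith [sq_nonneg ‖z (t + 1) - z t‖, norm_nonneg (z (t + 1) - z t)]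
  have := norm_eq_zero.mp this
  exact sub_eq_zero.mp this
end

section
/- Let E be a real inner product space, Ψ : E → ℝ differentiable, Ψ* ∈ ℝ, and (zᵗ)_{t∈ℕ} ⊂ E with Ψ(zᵗ) ≥ Ψ* for all t and Ψ(z⁰) − Ψ* ≤ 1. Let a, b, C > 0, θ ∈ (1/2, 1), and assume for every t: (H1) Ψ(zᵗ) − Ψ(z^{t+1}) ≥ a‖z^{t+1} − zᵗ‖², (H2) ‖∇Ψ(z^{t+1})‖ ≤ b‖z^{t+1} − zᵗ‖, and the Łojasiewicz inequality ‖∇Ψ(z^{t+1})‖ ≥ (1/C)·(Ψ(z^{t+1}) − Ψ*)^{1−θ}. Then the objective values converge at a linear (geometric) rate: Ψ(zᵗ) − Ψ* ≤ (1 + a/(b²C²))^{−t}·(Ψ(z⁰) − Ψ*) for all t. (The θ ∈ (1/2, 1) case of the convergence-rate claim: with desingularizing function φ(s) = (C/θ)s^θ, IPAD converges with a linear rate.) -/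
/-- The θ ∈ (1/2, 1) case of the convergence-rate claim: IPAD converges with a linear
(geometric) rate in objective values. -/
theorem stmt_15 {E : Type*} [NormedAddCommGroup E] [InnerProductSpace ℝ E] [CompleteSpace E]
    (Ψ : E → ℝ) (hΨ : Differentiable ℝ Ψ)
    (Ψstar : ℝ) (z : ℕ → E) (hge : ∀ t : ℕ, Ψ (z t) ≥ Ψstar)
    (h0 : Ψ (z 0) - Ψstar ≤ 1)
    (a b C θ : ℝ) (ha : 0 < a) (hb : 0 < b) (hC : 0 < C)
    (hθ₁ : 1 / 2 < θ) (hθ₂ : θ < 1)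
    (H1 : ∀ t : ℕ, Ψ (z t) - Ψ (z (t + 1)) ≥ a * ‖z (t + 1) - z t‖ ^ 2)
    (H2 : ∀ t : ℕ, ‖gradient Ψ (z (t + 1))‖ ≤ b * ‖z (t + 1) - z t‖)
    (hLoj : ∀ t : ℕ,
      ‖gradient Ψ (z (t + 1))‖ ≥ (1 / C) * (Ψ (z (t + 1)) - Ψstar) ^ (1 - θ)) :
    ∀ t : ℕ,
      Ψ (z t) - Ψstar ≤ (1 + a / (b ^ 2 * C ^ 2)) ^ (-(t : ℝ)) * (Ψ (z 0) - Ψstar) := by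
  set κ := a / (b ^ 2 * C ^ 2) with hκdef
  have hκ : 0 < κ := div_pos ha (by positivity)
  set r : ℕ → ℝ := fun t => Ψ (z t) - Ψstar with hr
  have hr0 : ∀ t, 0 ≤ r t := fun t => sub_nonneg.2 (hge t)
  -- r is nonincreasing
  have hmono : ∀ t, r (t + 1) ≤ r t := by
    intro t
    have h := H1 t
    have : 0 ≤ a * ‖z (t + 1) - z t‖ ^ 2 := by positivity
    simp only [hr]
    linarith
  -- r t ≤ 1
  have hle1 : ∀ t, r t ≤ 1 := by
    intro t
    induction t with
    | zero => exact h0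
    | succ n ih => exact (hmono n).trans ih
  -- key inequality
  have key : ∀ t, (1 + κ) * r (t + 1) ≤ r t := by
    intro t
    rcases eq_or_lt_of_le (hr0 (t + 1)) with h | h
    · rw [← h]; simpa using hr0 t
    · -- r (t+1) > 0
      have hrp1 : r (t + 1) ≤ r (t + 1) ^ (2 * (1 - θ)) := by
        have := Real.rpow_le_rpow_of_exponent_ge h (hle1 (t + 1))
          (show 2 * (1 - θ) ≤ (1:ℝ) by linarith)
        rwa [Real.rpow_one] at this
      -- from Loj and H2
      have h1 : (1 / C) * r (t + 1) ^ (1 - θ) ≤ b * ‖z (t + 1) - z t‖ :=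
        le_trans (hLoj t) (H2 t)
      have hnn : 0 ≤ (1 / C) * r (t + 1) ^ (1 - θ) := by positivity
      have h2 : ((1 / C) * r (t + 1) ^ (1 - θ)) ^ 2 ≤ (b * ‖z (t + 1) - z t‖) ^ 2 := by
        apply pow_le_pow_left₀ hnn h1
      have hsq : ((1 / C) * r (t + 1) ^ (1 - θ)) ^ 2
          = (1 / C ^ 2) * r (t + 1) ^ (2 * (1 - θ)) := by
        rw [mul_pow, ← Real.rpow_natCast (r (t + 1) ^ (1 - θ)) 2, ← Real.rpow_mul (le_of_lt h)]
        ring_nf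
      have h3 : (1 / C ^ 2) * r (t + 1) ^ (2 * (1 - θ)) ≤ b ^ 2 * ‖z (t + 1) - z t‖ ^ 2 := by
        rw [← hsq]; calc ((1 / C) * r (t + 1) ^ (1 - θ)) ^ 2
            ≤ (b * ‖z (t + 1) - z t‖) ^ 2 := h2
          _ = b ^ 2 * ‖z (t + 1) - z t‖ ^ 2 := by ring
      have h4 : κ * r (t + 1) ≤ a * ‖z (t + 1) - z t‖ ^ 2 := by
        have : κ * r (t + 1) ≤ κ * r (t + 1) ^ (2 * (1 - θ)) :=
          mul_le_mul_of_nonneg_left hrp1 (le_of_lt hκ)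
        refine this.trans ?_
        have := mul_le_mul_of_nonneg_left h3 (le_of_lt (show (0:ℝ) < a / b ^ 2 from by positivity))
        calc κ * r (t + 1) ^ (2 * (1 - θ))
            = (a / b ^ 2) * ((1 / C ^ 2) * r (t + 1) ^ (2 * (1 - θ))) := by
              rw [hκdef]; ring
          _ ≤ (a / b ^ 2) * (b ^ 2 * ‖z (t + 1) - z t‖ ^ 2) := this
          _ = a * ‖z (t + 1) - z t‖ ^ 2 := by field_simp
      have h5 := H1 t
      have : r t - r (t + 1) ≥ a * ‖z (t + 1) - z t‖ ^ 2 := by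
        simp only [hr]; linarith
      nlinarith
  -- conclude by induction, rewriting rpow as inverse of nat pow
  have hb1 : (0:ℝ) < 1 + κ := by linarith
  have main : ∀ t, r t ≤ ((1 + κ) ^ t)⁻¹ * r 0 := by
    intro t
    induction t with
    | zero => simp
    | succ n ih =>
        have hp : (0:ℝ) < (1 + κ) ^ n := pow_pos hb1 n
        have h6 : r (n + 1) ≤ r n / (1 + κ) := by
          rw [le_div_iff₀ hb1]; linarith [key n]
        calc r (n + 1) ≤ r n / (1 + κ) := h6
          _ ≤ (((1 + κ) ^ n)⁻¹ * r 0) / (1 + κ) := by gcongr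
          _ = ((1 + κ) ^ (n + 1))⁻¹ * r 0 := by
              rw [pow_succ, mul_inv]; ring
  intro t
  have hrw : (1 + κ) ^ (-(t : ℝ)) = ((1 + κ) ^ t)⁻¹ := by
    rw [Real.rpow_neg (le_of_lt hb1), Real.rpow_natCast]
  rw [hrw]
  exact main t
end
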